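/- Let T be a pruned tree of sequences and ξ an inductive probability measure on T. Then there exists exactly one Borel probability measure λ on lim T such that λ([t]) = ξ(t) for every t ∈ T. -/

import Mathlib

open scoped ENNReal
open MeasureTheory

noncomputable section

/-- A tree of sequences: a nonempty set of finite lists of naturals closed under prefixes. -/
def IsTree (T : Set (List ℕ)) : Prop :=
  T.Nonempty ∧ ∀ s t : List ℕ, s <+: t → t ∈ T → s ∈ T

/-- `t` is a maximal node of `T`: it has no successor in `T`. -/
def IsMaxNode (T : Set (List ℕ)) (t : List ℕ) : Prop :=
  ∀ k : ℕ, t ++ [k] ∉ T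

/-- A probability tree on `T`. -/
def IsProbTree (T : Set (List ℕ)) (p : List ℕ → ℕ → ℝ≥0∞) : Prop :=
  ∀ t ∈ T, ¬ IsMaxNode T t →
    (∀ k : ℕ, t ++ [k] ∉ T → p t k = 0) ∧ (∑' k : ℕ, p t k = 1)

/-- The measure induced by a probability tree: `Ξ_p(t) = ∏_{i<|t|} p (t↾i) (t i)`. -/
def Xi (p : List ℕ → ℕ → ℝ≥0∞) (t : List ℕ) : ℝ≥0∞ :=
  ∏ i ∈ Finset.range t.length, p (t.take i) (t.getD i 0)

/-- An inductive probability measure on `T`. -/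
def IsIPM (T : Set (List ℕ)) (ξ : List ℕ → ℝ≥0∞) : Prop :=
  ξ [] = 1 ∧ ∀ t ∈ T, ¬ IsMaxNode T t →
    ξ t = ∑' k : {k : ℕ // t ++ [k] ∈ T}, ξ (t ++ [k.1])

/-- The set of infinite branches of `T`. -/
def limT (T : Set (List ℕ)) : Set (ℕ → ℕ) :=
  {x | ∀ n : ℕ, (List.range n).map x ∈ T}

/-- `T` is pruned: every node has a successor in `T`. -/
def Pruned (T : Set (List ℕ)) : Prop := ∀ t ∈ T, ∃ k : ℕ, t ++ [k] ∈ T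

/-- The basic clopen set `[t]` of branches through `t`. -/
def cyl (T : Set (List ℕ)) (t : List ℕ) : Set ↥(limT T) :=
  {x | (List.range t.length).map x.1 = t}

namespace Stmt7Aux

variable (T : Set (List ℕ)) (ξ : List ℕ → ℝ≥0∞)

open Classical in
/-- `ξ` extended by zero outside `T`. -/
def xi' (t : List ℕ) : ℝ≥0∞ := if t ∈ T then ξ t else 0

/-- auxiliary recursion for left endpoints (argument is the reversed node). -/
def go : List ℕ → ℝ≥0∞
  | [] => 0
  | k :: s => go s + ∑ j ∈ Finset.range k, xi' T ξ (s.reverse ++ [j])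

/-- Left endpoint of the interval attached to node `t`. -/
def L (t : List ℕ) : ℝ≥0∞ := go T ξ t.reverse

/-- The half-open interval attached to node `t`. -/
def Iv (t : List ℕ) : Set ℝ≥0∞ := Set.Ico (L T ξ t) (L T ξ t + xi' T ξ t)

lemma L_nil : L T ξ [] = 0 := rfl

lemma L_concat (t : List ℕ) (k : ℕ) :
    L T ξ (t ++ [k]) = L T ξ t + ∑ j ∈ Finset.range k, xi' T ξ (t ++ [j]) := by
  simp [L, go, List.reverse_append]

variable {T ξ}
variable (hT : IsTree T) (hpr : Pruned T) (hξ : IsIPM T ξ)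

include hT in
lemma nil_mem : [] ∈ T := by
  obtain ⟨t, ht⟩ := hT.1
  exact hT.2 [] t List.nil_prefix ht

include hT hξ in
lemma xi'_nil : xi' T ξ [] = 1 := by
  simp [xi', nil_mem hT, hξ.1]

include hT hpr hξ in
lemma xi'_tsum (t : List ℕ) : xi' T ξ t = ∑' k : ℕ, xi' T ξ (t ++ [k]) := by
  by_cases ht : t ∈ T
  · have hmax : ¬ IsMaxNode T t := by
      obtain ⟨k, hk⟩ := hpr t ht
      exact fun h => h k hk
    have h1 := hξ.2 t ht hmax
    have h2 : ∑' k : ℕ, xi' T ξ (t ++ [k])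
        = ∑' k : ↑{k : ℕ | t ++ [k] ∈ T}, ξ (t ++ [k.1]) :=
      calc ∑' k : ℕ, xi' T ξ (t ++ [k])
          = ∑' k : ℕ, Set.indicator {k : ℕ | t ++ [k] ∈ T} (fun k => ξ (t ++ [k])) k :=
            tsum_congr (fun k => by by_cases h : t ++ [k] ∈ T <;> simp [xi', h])
        _ = _ := (tsum_subtype _ _).symm
    rw [h2, xi', if_pos ht, h1]
    rfl
  · have : ∀ k : ℕ, xi' T ξ (t ++ [k]) = 0 := by
      intro k
      have : t ++ [k] ∉ T := fun h => ht (hT.2 t (t ++ [k]) ⟨[k], rfl⟩ h)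
      simp [xi', this]
    simp only [this, tsum_zero]
    simp [xi', ht]

include hT hpr hξ in
lemma L_concat_le (t : List ℕ) (k : ℕ) :
    L T ξ (t ++ [k]) + xi' T ξ (t ++ [k]) ≤ L T ξ t + xi' T ξ t := by
  have h1 : L T ξ (t ++ [k]) + xi' T ξ (t ++ [k]) = L T ξ (t ++ [(k+1)]) := by
    rw [L_concat, L_concat, Finset.sum_range_succ, add_assoc]
  rw [h1, L_concat]
  gcongr
  rw [xi'_tsum hT hpr hξ t]
  exact ENNReal.sum_le_tsum _

include hT hpr hξ in
lemma L_add_xi'_le_one (t : List ℕ) : L T ξ t + xi' T ξ t ≤ 1 := by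
  induction t using List.reverseRecOn with
  | nil => simp [L_nil, xi'_nil hT hξ]
  | append_singleton s k ih => exact (L_concat_le hT hpr hξ s k).trans ih

include hT hpr hξ in
lemma L_ne_top (t : List ℕ) : L T ξ t ≠ ⊤ :=
  fun h => by
    have := L_add_xi'_le_one hT hpr hξ t
    rw [h] at this; simp at this

include hT hpr hξ in
lemma add_ne_top (t : List ℕ) : L T ξ t + xi' T ξ t ≠ ⊤ :=
  fun h => by have := L_add_xi'_le_one hT hpr hξ t; rw [h] at this; simp at this

include hT hpr hξ in
lemma Iv_subset' (t : List ℕ) (k : ℕ) : Iv T ξ (t ++ [k]) ⊆ Iv T ξ t := by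
  apply Set.Ico_subset_Ico
  · rw [L_concat]; exact le_self_add
  · exact L_concat_le hT hpr hξ t k

lemma Iv_disjoint_sib (t : List ℕ) {j k : ℕ} (hjk : j < k) :
    Disjoint (Iv T ξ (t ++ [j])) (Iv T ξ (t ++ [k])) := by
  rw [Set.disjoint_left]
  intro c hc1 hc2
  have h1 : c < L T ξ (t ++ [j]) + xi' T ξ (t ++ [j]) := hc1.2
  have h2 : L T ξ (t ++ [j]) + xi' T ξ (t ++ [j]) ≤ L T ξ (t ++ [k]) := by
    have : L T ξ (t ++ [j]) + xi' T ξ (t ++ [j]) = L T ξ (t ++ [(j+1)]) := by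
      rw [L_concat, L_concat, Finset.sum_range_succ, add_assoc]
    rw [this, L_concat, L_concat]
    exact add_le_add le_rfl (Finset.sum_le_sum_of_subset (Finset.range_subset_range.2 hjk))
  exact absurd hc2.1 (not_le.2 (h1.trans_le h2))

lemma mem_of_Iv_nonempty {t : List ℕ} {c : ℝ≥0∞} (hc : c ∈ Iv T ξ t) : t ∈ T := by
  by_contra ht
  have : xi' T ξ t = 0 := by simp [xi', ht]
  rw [Iv, this, add_zero] at hc
  exact absurd hc.1 (not_le.2 hc.2)

include hT hpr hξ in
lemma exists_step {t : List ℕ} (ht : t ∈ T) {c : ℝ≥0∞} (hc : c ∈ Iv T ξ t) :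
    ∃ k : ℕ, c ∈ Iv T ξ (t ++ [k]) := by
  have hsum : xi' T ξ t = ⨆ n, ∑ j ∈ Finset.range n, xi' T ξ (t ++ [j]) := by
    rw [xi'_tsum hT hpr hξ t, ENNReal.tsum_eq_iSup_nat]
  have hlt : c < L T ξ t + xi' T ξ t := hc.2
  rw [hsum, ENNReal.add_iSup] at hlt
  obtain ⟨n, hn⟩ := lt_iSup_iff.1 hlt
  rw [← L_concat] at hn
  -- minimal n with c < L (t ++ [n])
  have hex : ∃ n, c < L T ξ (t ++ [n]) := ⟨n, hn⟩
  classical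
  have hm : c < L T ξ (t ++ [Nat.find hex]) := Nat.find_spec hex
  have hm0 : Nat.find hex ≠ 0 := by
    intro h0
    rw [h0] at hm
    simp only [L_concat, Finset.range_zero, Finset.sum_empty, add_zero] at hm
    exact absurd hc.1 (not_le.2 hm)
  obtain ⟨k, hk⟩ := Nat.exists_eq_succ_of_ne_zero hm0
  rw [hk] at hm
  refine ⟨k, ?_, ?_⟩
  · have := Nat.find_min hex (m := k) (by omega)
    exact not_lt.1 this
  · have : L T ξ (t ++ [k]) + xi' T ξ (t ++ [k]) = L T ξ (t ++ [(k+1)]) := by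
      rw [L_concat, L_concat, Finset.sum_range_succ, add_assoc]
    rw [this]
    exact hm

include hT hpr hξ in
lemma Iv_disjoint : ∀ n (s t : List ℕ), s.length = n → t.length = n → s ≠ t →
    Disjoint (Iv T ξ s) (Iv T ξ t) := by
  intro n
  induction n with
  | zero =>
    intro s t hs ht hne
    exact absurd (by rw [List.eq_nil_of_length_eq_zero hs, List.eq_nil_of_length_eq_zero ht]) hne
  | succ n ih =>
    intro s t hs ht hne
    rcases s.eq_nil_or_concat with rfl | ⟨s', a, rfl⟩
    · simp at hs
    rcases t.eq_nil_or_concat with rfl | ⟨t', b, rfl⟩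
    · simp at ht
    simp only [List.concat_eq_append] at hs ht hne ⊢
    simp only [List.length_append, List.length_singleton] at hs ht
    by_cases hst : s' = t'
    · subst hst
      have hab : a ≠ b := by
        intro h; exact hne (by rw [h])
      rcases hab.lt_or_gt with h | h
      · exact Iv_disjoint_sib s' h
      · exact (Iv_disjoint_sib s' h).symm
    · exact Disjoint.mono (Iv_subset' hT hpr hξ s' a) (Iv_subset' hT hpr hξ t' b)
        (ih s' t' (by omega) (by omega) hst)

variable (T ξ) in
open Classical in
/-- The next coordinate chosen at node `t` for point `c`. -/
def step (t : List ℕ) (c : ℝ≥0∞) : ℕ :=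
  if h : ∃ k, c ∈ Iv T ξ (t ++ [k]) then Nat.find h else 0

variable (T ξ) in
/-- The node of length `n` whose interval contains `c`. -/
def F (c : ℝ≥0∞) : ℕ → List ℕ
  | 0 => []
  | n + 1 => F c n ++ [step T ξ (F c n) c]

variable (T ξ) in
/-- The branch attached to `c`. -/
def f (c : ℝ≥0∞) (n : ℕ) : ℕ := step T ξ (F T ξ c n) c

lemma F_length (c : ℝ≥0∞) (n : ℕ) : (F T ξ c n).length = n := by
  induction n with
  | zero => rfl
  | succ n ih => simp [F, ih]

lemma map_range_f (c : ℝ≥0∞) (n : ℕ) : (List.range n).map (f T ξ c) = F T ξ c n := by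
  induction n with
  | zero => rfl
  | succ n ih => rw [List.range_succ, List.map_append, ih]; rfl

include hT hpr hξ in
lemma F_invariant {c : ℝ≥0∞} (hc : c ∈ Iv T ξ []) (n : ℕ) :
    F T ξ c n ∈ T ∧ c ∈ Iv T ξ (F T ξ c n) := by
  induction n with
  | zero => exact ⟨nil_mem hT, hc⟩
  | succ n ih =>
    obtain ⟨hmem, hIv⟩ := ih
    have hex : ∃ k, c ∈ Iv T ξ (F T ξ c n ++ [k]) := exists_step hT hpr hξ hmem hIv
    classical
    have hspec := Nat.find_spec hex
    have : step T ξ (F T ξ c n) c = Nat.find hex := by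
      rw [step, dif_pos hex]
    rw [show F T ξ c (n+1) = F T ξ c n ++ [step T ξ (F T ξ c n) c] from rfl, this]
    exact ⟨mem_of_Iv_nonempty hspec, hspec⟩

include hT hpr hξ in
lemma F_eq_iff {c : ℝ≥0∞} (hc : c ∈ Iv T ξ []) {t : List ℕ} (ht : t ∈ T) :
    F T ξ c t.length = t ↔ c ∈ Iv T ξ t := by
  constructor
  · intro h
    rw [← h]
    exact (F_invariant hT hpr hξ hc t.length).2
  · intro h
    by_contra hne
    have h2 := (F_invariant hT hpr hξ hc t.length).2
    have hd := Iv_disjoint hT hpr hξ t.length (F T ξ c t.length) t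
      (F_length c t.length) rfl hne
    exact Set.disjoint_left.1 hd h2 h

lemma step_eq_iff (t : List ℕ) (c : ℝ≥0∞) (k : ℕ) :
    step T ξ t c = k ↔ (c ∈ Iv T ξ (t ++ [k]) ∨ (k = 0 ∧ ∀ j, c ∉ Iv T ξ (t ++ [j]))) := by
  classical
  rw [step]
  split_ifs with h
  · constructor
    · rintro rfl
      exact Or.inl (Nat.find_spec h)
    · rintro (hk | ⟨rfl, hall⟩)
      · -- k and Nat.find h both contain c; siblings distinct are disjoint
        by_contra hne
        rcases (Ne.lt_or_gt hne) with hlt | hlt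
        · exact Set.disjoint_left.1 (Iv_disjoint_sib t hlt) (Nat.find_spec h) hk
        · exact Set.disjoint_left.1 (Iv_disjoint_sib t hlt) hk (Nat.find_spec h)
      · exact absurd (Nat.find_spec h) (hall _)
  · constructor
    · rintro rfl
      exact Or.inr ⟨rfl, fun j hj => h ⟨j, hj⟩⟩
    · rintro (hk | ⟨rfl, _⟩)
      · exact absurd ⟨k, hk⟩ h
      · rfl

lemma measurableSet_Iv (t : List ℕ) : MeasurableSet (Iv T ξ t) := measurableSet_Ico

lemma measurableSet_step (t : List ℕ) (k : ℕ) :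
    MeasurableSet {c : ℝ≥0∞ | step T ξ t c = k} := by
  have : {c : ℝ≥0∞ | step T ξ t c = k}
      = Iv T ξ (t ++ [k]) ∪ (⋂ j, (Iv T ξ (t ++ [j]))ᶜ) ∩ {c | k = 0} := by
    ext c
    simp only [Set.mem_setOf_eq, step_eq_iff, Set.mem_union, Set.mem_inter_iff, Set.mem_iInter,
      Set.mem_compl_iff]
    tauto
  rw [this]
  exact (measurableSet_Iv _).union ((MeasurableSet.iInter fun j =>
    (measurableSet_Iv _).compl).inter (by by_cases h : k = 0 <;> simp [h]))

lemma measurableSet_F (n : ℕ) (t : List ℕ) : MeasurableSet {c : ℝ≥0∞ | F T ξ c n = t} := by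
  induction n generalizing t with
  | zero =>
    by_cases h : t = [] <;> · simp [F, h, Set.setOf_true, Set.setOf_false]
  | succ n ih =>
    rcases t.eq_nil_or_concat with rfl | ⟨t', b, rfl⟩
    · have : {c : ℝ≥0∞ | F T ξ c (n+1) = []} = ∅ := by
        ext c
        simp only [Set.mem_setOf_eq, Set.mem_empty_iff_false, iff_false]
        intro h
        have := F_length (T := T) (ξ := ξ) c (n+1)
        rw [h] at this
        simp at this
      rw [this]; exact MeasurableSet.empty
    · rw [show t'.concat b = t' ++ [b] from List.concat_eq_append]
      have : {c : ℝ≥0∞ | F T ξ c (n+1) = t' ++ [b]}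
          = {c | F T ξ c n = t'} ∩ {c | step T ξ t' c = b} := by
        ext c
        simp only [Set.mem_setOf_eq, Set.mem_inter_iff]
        constructor
        · intro h
          have h' : F T ξ c n ++ [step T ξ (F T ξ c n) c] = t' ++ [b] := h
          have hlen : (F T ξ c n).length = t'.length := by
            have := congrArg List.length h'
            simp at this
            omega
          obtain ⟨h1, h2⟩ := List.append_inj h' (by simpa using hlen)
          simp at h2
          exact ⟨h1, by rw [← h1]; exact h2⟩
        · rintro ⟨h1, h2⟩
          show F T ξ c n ++ [step T ξ (F T ξ c n) c] = t' ++ [b]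
          rw [h1, h2]
      rw [this]
      exact (ih t').inter (measurableSet_step t' b)

lemma measurable_f : Measurable (f T ξ) := by
  apply measurable_pi_lambda
  intro n
  apply measurable_to_countable'
  intro k
  have : (fun c => f T ξ c n) ⁻¹' {k}
      = ⋃ t : List ℕ, {c | F T ξ c n = t} ∩ {c | step T ξ t c = k} := by
    ext c
    simp only [Set.mem_preimage, Set.mem_singleton_iff, Set.mem_iUnion, Set.mem_inter_iff,
      Set.mem_setOf_eq, f]
    constructor
    · intro h
      exact ⟨F T ξ c n, rfl, h ▸ rfl⟩
    · rintro ⟨t, h1, h2⟩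
      rw [h1]; exact h2
  rw [this]
  exact MeasurableSet.iUnion fun t => (measurableSet_F n t).inter (measurableSet_step t k)

omit hT hpr hξ

lemma getD_map_range (x : ℕ → ℕ) {i n : ℕ} (h : i < n) :
    ((List.range n).map x).getD i 0 = x i := by
  rw [List.getD_eq_getElem?_getD, List.getElem?_map, List.getElem?_range h]
  rfl

/-- The cylinder in the full Baire space. -/
def Cy (t : List ℕ) : Set (ℕ → ℕ) := {x | (List.range t.length).map x = t}

lemma measurableSet_Cy (t : List ℕ) : MeasurableSet (Cy t) := by
  have : Cy t = ⋂ i ∈ Finset.range t.length, (fun x : ℕ → ℕ => x i) ⁻¹' {t.getD i 0} := by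
    ext x
    simp only [Cy, Set.mem_setOf_eq, Set.mem_iInter, Set.mem_preimage, Set.mem_singleton_iff,
      Finset.mem_range]
    constructor
    · intro h i hi
      rw [← h, getD_map_range x hi]
    · intro h
      apply List.ext_getElem (by simp)
      intro i h1 h2
      rw [List.getElem_map, List.getElem_range]
      rw [← List.getD_eq_getElem t 0 h2]
      exact h i (by simpa using h2)
  rw [this]
  exact MeasurableSet.biInter (Set.to_countable _)
    fun i _ => (measurable_pi_apply i) (measurableSet_singleton _)

variable (T) in
lemma measurableSet_limT : MeasurableSet (limT T) := by
  have : limT T = ⋂ n : ℕ, ⋃ t ∈ {t : List ℕ | t ∈ T ∧ t.length = n}, Cy t := by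
    ext x
    simp only [limT, Set.mem_setOf_eq, Set.mem_iInter, Set.mem_iUnion]
    constructor
    · intro h n
      exact ⟨(List.range n).map x, ⟨h n, by simp⟩, by simp [Cy]⟩
    · rintro h n
      obtain ⟨t, ⟨ht, hlen⟩, hx⟩ := h n
      rw [show (List.range n).map x = t by rw [← hlen]; exact hx]
      exact ht
  rw [this]
  exact MeasurableSet.iInter fun n => MeasurableSet.biUnion (Set.to_countable _)
    fun t _ => measurableSet_Cy t

variable (T ξ) in
def g (r : ℝ) : ℕ → ℕ := f T ξ (ENNReal.ofReal r)

lemma measurable_g : Measurable (g T ξ) := measurable_f.comp ENNReal.measurable_ofReal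

variable (T ξ) in
/-- The image measure on Baire space. -/
def mu0 : Measure (ℕ → ℕ) := Measure.map (g T ξ) ((volume : Measure ℝ).restrict (Set.Ico 0 1))

include hT hξ in
lemma mem_Iv_nil {r : ℝ} (hr : r ∈ Set.Ico (0:ℝ) 1) : ENNReal.ofReal r ∈ Iv T ξ [] := by
  refine ⟨by simp [L_nil], ?_⟩
  rw [L_nil, zero_add, xi'_nil hT hξ]
  exact ENNReal.ofReal_lt_one.2 hr.2

include hT hpr hξ in
lemma xi'_ne_top (t : List ℕ) : xi' T ξ t ≠ ⊤ := fun h => by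
  have := L_add_xi'_le_one hT hpr hξ t
  rw [h, add_top] at this
  simp at this

include hT hpr hξ in
lemma g_preimage {t : List ℕ} (ht : t ∈ T) :
    g T ξ ⁻¹' Cy t ∩ Set.Ico (0:ℝ) 1
      = Set.Ico (L T ξ t).toReal ((L T ξ t + xi' T ξ t)).toReal := by
  have hA : L T ξ t ≠ ⊤ := L_ne_top hT hpr hξ t
  have hB : L T ξ t + xi' T ξ t ≠ ⊤ := add_ne_top hT hpr hξ t
  have hB1 : L T ξ t + xi' T ξ t ≤ 1 := L_add_xi'_le_one hT hpr hξ t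
  ext r
  simp only [Set.mem_inter_iff, Set.mem_preimage, Set.mem_Ico]
  constructor
  · rintro ⟨hg, hr0, hr1⟩
    have hmem : ENNReal.ofReal r ∈ Iv T ξ t := by
      rw [← F_eq_iff hT hpr hξ (mem_Iv_nil hT hξ ⟨hr0, hr1⟩) ht, ← map_range_f]
      exact hg
    exact ⟨ENNReal.toReal_le_of_le_ofReal hr0 hmem.1,
      (ENNReal.ofReal_lt_iff_lt_toReal hr0 hB).1 hmem.2⟩
  · rintro ⟨h1, h2⟩
    have hr0 : (0:ℝ) ≤ r := le_trans ENNReal.toReal_nonneg h1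
    have hr1 : r < 1 := lt_of_lt_of_le h2
      (by simpa using (ENNReal.toReal_le_toReal hB ENNReal.one_ne_top).2 hB1)
    have hmem : ENNReal.ofReal r ∈ Iv T ξ t :=
      ⟨(ENNReal.le_ofReal_iff_toReal_le hA hr0).2 h1,
        (ENNReal.ofReal_lt_iff_lt_toReal hr0 hB).2 h2⟩
    refine ⟨?_, hr0, hr1⟩
    show (List.range t.length).map (f T ξ (ENNReal.ofReal r)) = t
    rw [map_range_f]
    exact (F_eq_iff hT hpr hξ (mem_Iv_nil hT hξ ⟨hr0, hr1⟩) ht).2 hmem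

include hT hpr hξ in
lemma mu0_Cy {t : List ℕ} (ht : t ∈ T) : mu0 T ξ (Cy t) = ξ t := by
  rw [mu0, Measure.map_apply measurable_g (measurableSet_Cy t),
    Measure.restrict_apply' measurableSet_Ico, g_preimage hT hpr hξ ht, Real.volume_Ico]
  have hA : L T ξ t ≠ ⊤ := L_ne_top hT hpr hξ t
  have hx : xi' T ξ t ≠ ⊤ := xi'_ne_top hT hpr hξ t
  rw [ENNReal.toReal_add hA hx]
  rw [show (L T ξ t).toReal + (xi' T ξ t).toReal - (L T ξ t).toReal = (xi' T ξ t).toReal by ring]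
  rw [ENNReal.ofReal_toReal hx, xi', if_pos ht]

include hT hpr hξ in
lemma mu0_compl_limT : mu0 T ξ (limT T)ᶜ = 0 := by
  rw [mu0, Measure.map_apply measurable_g (measurableSet_limT T).compl,
    Measure.restrict_apply' measurableSet_Ico]
  convert measure_empty (μ := (volume : Measure ℝ))
  ext r
  simp only [Set.mem_inter_iff, Set.mem_preimage, Set.mem_compl_iff, Set.mem_empty_iff_false,
    iff_false, not_and]
  intro hg hr
  apply hg
  intro n
  rw [show g T ξ r = f T ξ (ENNReal.ofReal r) from rfl, map_range_f]
  exact (F_invariant hT hpr hξ (mem_Iv_nil hT hξ hr) n).1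

lemma mu0_univ : mu0 T ξ Set.univ = 1 := by
  rw [mu0, Measure.map_apply measurable_g MeasurableSet.univ, Set.preimage_univ,
    Measure.restrict_apply' measurableSet_Ico, Set.univ_inter, Real.volume_Ico]
  norm_num

variable (T) in
/-- The collection of basic clopen sets. -/
def Ccyl : Set (Set ↥(limT T)) := {S | ∃ t ∈ T, S = cyl T t}

lemma coord_measurableSet (n k : ℕ) :
    MeasurableSet[MeasurableSpace.generateFrom (Ccyl T)] {x : ↥(limT T) | x.1 n = k} := by
  have heq : {x : ↥(limT T) | x.1 n = k}
      = ⋃ t ∈ {t : List ℕ | t ∈ T ∧ t.length = n + 1 ∧ t.getD n 0 = k}, cyl T t := by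
    ext x
    simp only [Set.mem_setOf_eq, Set.mem_iUnion, exists_prop]
    constructor
    · intro h
      refine ⟨(List.range (n+1)).map x.1, ⟨x.2 (n+1), by simp, ?_⟩, ?_⟩
      · rw [getD_map_range x.1 (Nat.lt_succ_self n)]; exact h
      · show (List.range ((List.range (n+1)).map x.1).length).map x.1 = _
        simp
    · rintro ⟨t, ⟨htT, hlen, hget⟩, hx⟩
      have hx' : (List.range t.length).map x.1 = t := hx
      rw [← hget, ← hx', getD_map_range x.1 (by omega)]
  rw [heq]
  exact MeasurableSet.biUnion (Set.to_countable _)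
    fun t ht => MeasurableSpace.measurableSet_generateFrom ⟨t, ht.1, rfl⟩

lemma generateFrom_Ccyl :
    (inferInstance : MeasurableSpace ↥(limT T)) = MeasurableSpace.generateFrom (Ccyl T) := by
  apply le_antisymm
  · have hmeas : Measurable[MeasurableSpace.generateFrom (Ccyl T)]
        (Subtype.val : ↥(limT T) → ℕ → ℕ) := by
      letI : MeasurableSpace ↥(limT T) := MeasurableSpace.generateFrom (Ccyl T)
      apply measurable_pi_iff.2
      intro n
      apply measurable_to_countable'
      intro k
      exact coord_measurableSet n k
    intro S hS
    obtain ⟨S', hS', rfl⟩ := hS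
    exact hmeas hS'
  · apply MeasurableSpace.generateFrom_le
    rintro S ⟨t, ht, rfl⟩
    exact (measurableSet_Cy t).preimage measurable_subtype_coe

lemma cyl_subset_of_take {t1 t2 : List ℕ} (h : t1.length ≤ t2.length)
    (hpre : t2.take t1.length = t1) : cyl T t2 ⊆ cyl T t1 := by
  intro y hy
  have hy' : (List.range t2.length).map y.1 = t2 := hy
  show (List.range t1.length).map y.1 = t1
  calc (List.range t1.length).map y.1
      = ((List.range t2.length).map y.1).take t1.length := by
        rw [← List.map_take, List.take_range, min_eq_left h]
    _ = t2.take t1.length := by rw [hy']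
    _ = t1 := hpre

lemma isPiSystem_Ccyl : IsPiSystem (Ccyl T) := by
  rintro S1 ⟨t1, ht1, rfl⟩ S2 ⟨t2, ht2, rfl⟩ hne
  obtain ⟨x, hx1, hx2⟩ := hne
  have hx1' : (List.range t1.length).map x.1 = t1 := hx1
  have hx2' : (List.range t2.length).map x.1 = t2 := hx2
  rcases le_total t1.length t2.length with h | h
  · have hpre : t2.take t1.length = t1 := by
      calc t2.take t1.length
          = ((List.range t2.length).map x.1).take t1.length := by rw [hx2']
        _ = (List.range t1.length).map x.1 := by
            rw [← List.map_take, List.take_range, min_eq_left h]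
        _ = t1 := hx1'
    rw [Set.inter_eq_self_of_subset_right (cyl_subset_of_take h hpre)]
    exact ⟨t2, ht2, rfl⟩
  · have hpre : t1.take t2.length = t2 := by
      calc t1.take t2.length
          = ((List.range t1.length).map x.1).take t2.length := by rw [hx1']
        _ = (List.range t2.length).map x.1 := by
            rw [← List.map_take, List.take_range, min_eq_left h]
        _ = t2 := hx2'
    rw [Set.inter_eq_self_of_subset_left (cyl_subset_of_take h hpre)]
    exact ⟨t1, ht1, rfl⟩

end Stmt7Aux

open Stmt7Aux in
theorem stmt7 (T : Set (List ℕ)) (ξ : List ℕ → ℝ≥0∞)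
    (hT : IsTree T) (hpr : Pruned T) (hξ : IsIPM T ξ) :
    ∃! lam : Measure ↥(limT T),
      IsProbabilityMeasure lam ∧ ∀ t ∈ T, lam (cyl T t) = ξ t := by
  classical
  set lam : Measure ↥(limT T) := (mu0 T ξ).comap Subtype.val with hlamdef
  have hemb : MeasurableEmbedding (Subtype.val : ↥(limT T) → ℕ → ℕ) :=
    MeasurableEmbedding.subtype_coe (measurableSet_limT T)
  have himg : ∀ s : Set ↥(limT T), MeasurableSet s → MeasurableSet (Subtype.val '' s) :=
    fun s hs => hemb.measurableSet_image' hs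
  have hcomap : ∀ s : Set ↥(limT T), MeasurableSet s →
      lam s = mu0 T ξ (Subtype.val '' s) :=
    fun s hs => Measure.comap_apply _ Subtype.val_injective himg _ hs
  have hlim1 : mu0 T ξ (limT T) = 1 := by
    have h := measure_add_measure_compl (μ := mu0 T ξ) (measurableSet_limT T)
    rw [mu0_compl_limT hT hpr hξ, add_zero, mu0_univ] at h
    exact h
  have hcylval : ∀ t : List ℕ, Subtype.val '' cyl T t = Cy t ∩ limT T := by
    intro t
    ext y
    constructor
    · rintro ⟨x, hx, rfl⟩
      exact ⟨hx, x.2⟩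
    · rintro ⟨h1, h2⟩
      exact ⟨⟨y, h2⟩, h1, rfl⟩
  have hcylmeas : ∀ t : List ℕ, MeasurableSet (cyl T t) :=
    fun t => (measurableSet_Cy t).preimage measurable_subtype_coe
  have hvals : ∀ t ∈ T, lam (cyl T t) = ξ t := by
    intro t ht
    rw [hcomap _ (hcylmeas t), hcylval t,
      measure_inter_conull (mu0_compl_limT hT hpr hξ), mu0_Cy hT hpr hξ ht]
  have hprob : IsProbabilityMeasure lam := by
    constructor
    rw [hcomap _ MeasurableSet.univ, Subtype.coe_image_univ, hlim1]
  refine ⟨lam, ⟨hprob, hvals⟩, ?_⟩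
  rintro ν ⟨hν, hνvals⟩
  haveI := hν
  refine ext_of_generate_finite (Ccyl T) (generateFrom_Ccyl) (isPiSystem_Ccyl) ?_ ?_
  · rintro S ⟨t, ht, rfl⟩
    rw [hνvals t ht, hvals t ht]
  · rw [measure_univ, measure_univ]
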